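/- arXiv:1111.2778 — 2 statements merged into one kernel-verified Lean document; each statement's English description precedes it below -/
import Mathlib

section
/- Let C be any d-dimensional copula, C^#(s,u) = s·C(u) on [0,1]^{d+1}, and define Ψ(H^#)(s,u) = H^#(s, H⁻(u)) − s·H(H⁻(u)), where H(u) = H^#(1,u), H⁻(u) = (H₁⁻(u₁),...,H_d⁻(u_d)), for H^# ∈ ℓ^∞([0,1]^{d+1}) such that H is a distribution function on [0,1]^d with marginals vanishing at 0. Then Ψ is Hadamard-differentiable at C^# (tangentially to all of ℓ^∞, i.e., fully), with derivative Ψ'_{C^#}(α^#)(s,u) = α^#(s,u) − s·α^#(1,u), valid for all uniformly continuous bounded α^#. -/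
open MeasureTheory Set Filter
open scoped ENNReal

/-- A `d`-dimensional copula. -/
def IsCopula (d : ℕ) (C : (Fin d → ℝ) → ℝ) : Prop :=
  ∃ μ : Measure (Fin d → ℝ), IsProbabilityMeasure μ ∧
    (∀ p : Fin d, ∀ t ∈ Icc (0:ℝ) 1, μ {x | x p ≤ t} = ENNReal.ofReal t) ∧
    (∀ u, C u = (μ {x | ∀ p, x p ≤ u p}).toReal)

/-- The unit cube `[0,1]^d`. -/
def cube (d : ℕ) : Set (Fin d → ℝ) := Set.univ.pi fun _ => Icc 0 1

/-- `x^{(p)}`: all coordinates `1` except the `p`-th, which is `x`. -/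
def margVec {d : ℕ} (p : Fin d) (s : ℝ) : Fin d → ℝ := Function.update (fun _ => 1) p s

lemma margVec_mem_cube {d : ℕ} (p : Fin d) {x : ℝ} (hx : x ∈ Icc (0:ℝ) 1) :
    margVec p x ∈ cube d := by
  intro q _
  by_cases h : q = p
  · subst h; simpa [margVec] using hx
  · simp [margVec, Function.update_of_ne h]

lemma margVec_one {d : ℕ} (p : Fin d) : margVec p 1 = fun _ => (1:ℝ) := by
  funext q
  by_cases h : q = p
  · subst h; simp [margVec]
  · simp [margVec, Function.update_of_ne h]

lemma copula_marg {d : ℕ} {C : (Fin d → ℝ) → ℝ} (hC : IsCopula d C) (p : Fin d)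
    {x : ℝ} (hx : x ∈ Icc (0:ℝ) 1) : C (margVec p x) = x := by
  obtain ⟨μ, hμ, hmarg, hval⟩ := hC
  rw [hval]
  have hAp : μ {y : Fin d → ℝ | y p ≤ x} = ENNReal.ofReal x := hmarg p x hx
  have hnull : ∀ q : Fin d, μ {y : Fin d → ℝ | 1 < y q} = 0 := by
    intro q
    have h1 : μ {y : Fin d → ℝ | y q ≤ 1} = 1 := by
      rw [hmarg q 1 (by norm_num)]; simp
    have hm : MeasurableSet {y : Fin d → ℝ | y q ≤ 1} :=
      measurableSet_le (measurable_pi_apply q) measurable_const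
    have hcompl : {y : Fin d → ℝ | 1 < y q} = {y : Fin d → ℝ | y q ≤ 1}ᶜ := by
      ext y; simp [not_le]
    rw [hcompl, measure_compl hm (by simp [h1]), h1, measure_univ, tsub_self]
  have hsub : {y : Fin d → ℝ | ∀ q, y q ≤ margVec p x q} ⊆ {y | y p ≤ x} := by
    intro y hy
    have := hy p
    simpa [margVec] using this
  have hle : μ {y : Fin d → ℝ | ∀ q, y q ≤ margVec p x q} ≤ ENNReal.ofReal x :=
    hAp ▸ measure_mono hsub
  have hdiff : {y : Fin d → ℝ | y p ≤ x} \ {y | ∀ q, y q ≤ margVec p x q}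
      ⊆ ⋃ q : Fin d, {y : Fin d → ℝ | 1 < y q} := by
    rintro y ⟨hyp, hyn⟩
    have hyn' : ¬ ∀ q, y q ≤ margVec p x q := hyn
    push_neg at hyn'
    obtain ⟨q, hq⟩ := hyn'
    refine mem_iUnion.2 ⟨q, ?_⟩
    by_cases h : q = p
    · subst h; simp [margVec] at hq; exact absurd hyp (not_le.2 hq)
    · simpa [margVec, Function.update_of_ne h] using hq
  have hdiff0 : μ ({y : Fin d → ℝ | y p ≤ x} \ {y | ∀ q, y q ≤ margVec p x q}) = 0 :=
    le_antisymm (le_trans (measure_mono hdiff) (le_of_eq (measure_iUnion_null hnull)))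
      zero_le
  have hge : ENNReal.ofReal x ≤ μ {y : Fin d → ℝ | ∀ q, y q ≤ margVec p x q} := by
    calc ENNReal.ofReal x = μ {y : Fin d → ℝ | y p ≤ x} := hAp.symm
      _ ≤ μ ({y : Fin d → ℝ | ∀ q, y q ≤ margVec p x q}
            ∪ ({y : Fin d → ℝ | y p ≤ x} \ {y | ∀ q, y q ≤ margVec p x q})) := by
          apply measure_mono; intro y hy
          by_cases h : y ∈ {y : Fin d → ℝ | ∀ q, y q ≤ margVec p x q}
          · exact Or.inl h
          · exact Or.inr ⟨hy, h⟩
      _ ≤ _ + _ := measure_union_le _ _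
      _ = μ {y : Fin d → ℝ | ∀ q, y q ≤ margVec p x q} := by rw [hdiff0, add_zero]
  rw [le_antisymm hle hge, ENNReal.toReal_ofReal hx.1]

lemma finv_bound (H : ℝ → ℝ) (δ : ℝ) (hδ : 0 ≤ δ)
    (hH : ∀ x ∈ Icc (0:ℝ) 1, |H x - x| ≤ δ) (hH1 : H 1 = 1) (hH0 : H 0 = 0)
    (q : ℝ) (hq : q ∈ Icc (0:ℝ) 1) (F : ℝ)
    (hF1 : q ∈ Ioc (0:ℝ) 1 → F = sInf {x ∈ Icc (0:ℝ) 1 | q ≤ H x})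
    (hF0 : q = 0 → F = sSup {x ∈ Icc (0:ℝ) 1 | H x = 0}) :
    F ∈ Icc (0:ℝ) 1 ∧ |F - q| ≤ δ := by
  rcases eq_or_lt_of_le hq.1 with h0 | h0
  · -- q = 0
    rw [hF0 h0.symm]
    set T := {x ∈ Icc (0:ℝ) 1 | H x = 0} with hT
    have h0T : (0:ℝ) ∈ T := ⟨by norm_num, hH0⟩
    have hbdd : BddAbove T := ⟨1, fun x hx => hx.1.2⟩
    have hle1 : sSup T ≤ 1 := csSup_le ⟨0, h0T⟩ (fun x hx => hx.1.2)
    have hge0 : 0 ≤ sSup T := le_csSup hbdd h0T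
    have hleδ : sSup T ≤ δ := by
      apply csSup_le ⟨0, h0T⟩
      intro x hx
      have := hH x hx.1
      rw [hx.2] at this
      have := abs_le.1 this
      linarith [this.1]
    exact ⟨⟨hge0, hle1⟩, by rw [← h0, sub_zero, abs_of_nonneg hge0]; exact hleδ⟩
  · -- q > 0
    have hq' : q ∈ Ioc (0:ℝ) 1 := ⟨h0, hq.2⟩
    rw [hF1 hq']
    set S := {x ∈ Icc (0:ℝ) 1 | q ≤ H x} with hS
    have h1S : (1:ℝ) ∈ S := ⟨by norm_num, by rw [hH1]; exact hq.2⟩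
    have hbdd : BddBelow S := ⟨0, fun x hx => hx.1.1⟩
    have hge0 : 0 ≤ sInf S := le_csInf ⟨1, h1S⟩ (fun x hx => hx.1.1)
    have hle1 : sInf S ≤ 1 := csInf_le hbdd h1S
    have hgeq : q - δ ≤ sInf S := by
      apply le_csInf ⟨1, h1S⟩
      intro x hx
      have h := abs_le.1 (hH x hx.1)
      linarith [hx.2]
    have hleq : sInf S ≤ q + δ := by
      by_cases h : q + δ ≤ 1
      · apply csInf_le hbdd
        refine ⟨⟨by linarith [hq.1], h⟩, ?_⟩
        have := abs_le.1 (hH (q + δ) ⟨by linarith [hq.1], h⟩)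
        linarith [this.1]
      · push_neg at h; linarith
    exact ⟨⟨hge0, hle1⟩, abs_le.2 ⟨by linarith, by linarith⟩⟩


/-- Hadamard differentiability of `Ψ` at `C^#`, full tangent space:
for any copula `C`, `tₙ → 0` (`tₙ ≠ 0`), bounded `αₙ^#` converging uniformly on
`[0,1]^{d+1}` to a uniformly continuous bounded `α^#`, with `C^# + tₙαₙ^#` in the domain
of `Ψ`, the difference quotients of `Ψ` converge uniformly to
`(s,u) ↦ α^#(s,u) − s·α^#(1,u)` (note `Ψ(C^#) = 0`). -/
theorem Psi_hadamard_differentiable_at_Csharp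
    (d : ℕ) (C : (Fin d → ℝ) → ℝ) (hC : IsCopula d C)
    (t : ℕ → ℝ) (ht0 : ∀ n, t n ≠ 0) (htt : Tendsto t atTop (nhds 0))
    (α : ℝ → (Fin d → ℝ) → ℝ) (αn : ℕ → ℝ → (Fin d → ℝ) → ℝ)
    (hbdd : ∀ n, ∃ M, ∀ s ∈ Icc (0:ℝ) 1, ∀ u ∈ cube d, |αn n s u| ≤ M)
    (hunif : TendstoUniformlyOn (fun n q => αn n q.1 q.2) (fun q => α q.1 q.2) atTop
      (Icc (0:ℝ) 1 ×ˢ cube d))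
    (hαuc : UniformContinuousOn (fun q : ℝ × (Fin d → ℝ) => α q.1 q.2)
      (Icc (0:ℝ) 1 ×ˢ cube d))
    (hαbdd : ∃ M, ∀ s ∈ Icc (0:ℝ) 1, ∀ u ∈ cube d, |α s u| ≤ M)
    -- `H = C + tₙαₙ^#(1,·)` is a distribution function on `[0,1]^d`,
    -- marginals vanishing at `0`:
    (hdom : ∀ n, ∃ ν : Measure (Fin d → ℝ), IsProbabilityMeasure ν ∧
      (∀ p : Fin d, ν {x | x p ≤ 0} = 0 ∧ ν {x | 1 < x p} = 0) ∧
      (∀ u ∈ cube d, C u + t n * αn n 1 u = (ν {x | ∀ p, x p ≤ u p}).toReal))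
    -- generalized inverses of the marginals of `H`:
    (Finv : ℕ → Fin d → ℝ → ℝ)
    (hFinv : ∀ n (p : Fin d), ∀ q ∈ Ioc (0:ℝ) 1,
      Finv n p q = sInf {x ∈ Icc (0:ℝ) 1 |
        q ≤ C (margVec p x) + t n * αn n 1 (margVec p x)})
    (hFinv0 : ∀ n (p : Fin d), Finv n p 0 = sSup {x ∈ Icc (0:ℝ) 1 |
        C (margVec p x) + t n * αn n 1 (margVec p x) = 0}) :
    Tendsto (fun n => ⨆ q : (Icc (0:ℝ) 1 ×ˢ cube d : Set (ℝ × (Fin d → ℝ))),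
      |(((q.1.1 * C (fun p => Finv n p (q.1.2 p)) + t n * αn n q.1.1 (fun p => Finv n p (q.1.2 p)))
          - q.1.1 * (C (fun p => Finv n p (q.1.2 p)) + t n * αn n 1 (fun p => Finv n p (q.1.2 p))))
          / t n)
        - (α q.1.1 q.1.2 - q.1.1 * α 1 q.1.2)|) atTop (nhds 0) := by
  obtain ⟨Mα, hMα⟩ := hαbdd
  have h0cube : (fun _ => (0:ℝ)) ∈ cube d := by intro p _; exact ⟨le_refl 0, zero_le_one⟩
  have hq0 : ((0:ℝ), (fun _ => (0:ℝ))) ∈ Icc (0:ℝ) 1 ×ˢ cube d :=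
    ⟨⟨le_refl 0, zero_le_one⟩, h0cube⟩
  have hMα0 : 0 ≤ Mα := le_trans (abs_nonneg _) (hMα 0 hq0.1 _ h0cube)
  rw [Metric.tendsto_atTop]
  intro ε hε
  have h1 := (Metric.tendstoUniformlyOn_iff.1 hunif) 1 one_pos
  have h3 := (Metric.tendstoUniformlyOn_iff.1 hunif) (ε/8) (by positivity)
  obtain ⟨δuc, hδucpos, huc⟩ := (Metric.uniformContinuousOn_iff.1 hαuc) (ε/8) (by positivity)
  have h2 : ∀ᶠ n in atTop, |t n| * (Mα + 1) < δuc := by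
    have ht : Tendsto (fun n => |t n| * (Mα + 1)) atTop (nhds 0) := by
      have := htt.abs.mul_const (Mα + 1)
      simpa using this
    exact ht.eventually_lt_const hδucpos
  have hcomb := (h1.and h3).and h2
  rw [eventually_atTop] at hcomb
  obtain ⟨N, hN⟩ := hcomb
  refine ⟨N, fun n hn => ?_⟩
  obtain ⟨⟨hn1, hn3⟩, hn2⟩ := hN n hn
  set δ' := |t n| * (Mα + 1) with hδ'def
  have hδ'0 : 0 ≤ δ' := by positivity
  -- bound on αn n 1
  have haux : ∀ v ∈ cube d, |αn n 1 v| ≤ Mα + 1 := by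
    intro v hv
    have hmem : ((1:ℝ), v) ∈ Icc (0:ℝ) 1 ×ˢ cube d := ⟨⟨zero_le_one, le_refl 1⟩, hv⟩
    have := hn1 (1, v) hmem
    rw [Real.dist_eq] at this
    have hb := hMα 1 hmem.1 v hv
    calc |αn n 1 v| = |α 1 v - (α 1 v - αn n 1 v)| := by ring_nf
      _ ≤ |α 1 v| + |α 1 v - αn n 1 v| := abs_sub _ _
      _ ≤ Mα + 1 := add_le_add hb this.le
  obtain ⟨ν, hνprob, hν0, hνval⟩ := hdom n
  -- marginal H values at 1 and 0
  have hH1 : ∀ p : Fin d, C (margVec p 1) + t n * αn n 1 (margVec p 1) = 1 := by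
    intro p
    rw [hνval _ (margVec_mem_cube p ⟨zero_le_one, le_refl 1⟩)]
    have hseteq : {x : Fin d → ℝ | ∀ q, x q ≤ margVec p 1 q} = {x : Fin d → ℝ | ∀ p, x p ≤ (1:ℝ)} := by
      simp [margVec_one p]
    have hfull : ν {x : Fin d → ℝ | ∀ p, x p ≤ (1:ℝ)} = 1 := by
      have hcsub : {x : Fin d → ℝ | ∀ p, x p ≤ (1:ℝ)}ᶜ ⊆ ⋃ p, {x : Fin d → ℝ | 1 < x p} := by
        intro x hx
        simp only [mem_compl_iff, mem_setOf_eq, not_forall, not_le] at hx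
        obtain ⟨p, hp⟩ := hx
        exact mem_iUnion.2 ⟨p, hp⟩
      have hc0 : ν ({x : Fin d → ℝ | ∀ p, x p ≤ (1:ℝ)}ᶜ) = 0 :=
        le_antisymm (le_trans (measure_mono hcsub)
          (le_of_eq (measure_iUnion_null (fun p => (hν0 p).2)))) zero_le
      have h1le : (1:ℝ≥0∞) ≤ ν {x : Fin d → ℝ | ∀ p, x p ≤ (1:ℝ)} := by
        calc (1:ℝ≥0∞) = ν univ := (measure_univ).symm
          _ ≤ ν {x : Fin d → ℝ | ∀ p, x p ≤ (1:ℝ)} + ν ({x : Fin d → ℝ | ∀ p, x p ≤ (1:ℝ)}ᶜ) := by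
              rw [← union_compl_self {x : Fin d → ℝ | ∀ p, x p ≤ (1:ℝ)}]
              exact measure_union_le _ _
          _ = ν {x : Fin d → ℝ | ∀ p, x p ≤ (1:ℝ)} := by rw [hc0, add_zero]
      exact le_antisymm prob_le_one h1le
    rw [hseteq, hfull]
    exact ENNReal.toReal_one
  have hH0 : ∀ p : Fin d, C (margVec p 0) + t n * αn n 1 (margVec p 0) = 0 := by
    intro p
    rw [hνval _ (margVec_mem_cube p ⟨le_refl 0, zero_le_one⟩)]
    have : ν {x : Fin d → ℝ | ∀ q, x q ≤ margVec p 0 q} = 0 := by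
      refine le_antisymm (le_trans (measure_mono ?_) (le_of_eq (hν0 p).1)) zero_le
      intro x hx
      have := hx p
      simpa [margVec] using this
    rw [this]; simp
  have hHx : ∀ p : Fin d, ∀ x ∈ Icc (0:ℝ) 1,
      |(C (margVec p x) + t n * αn n 1 (margVec p x)) - x| ≤ δ' := by
    intro p x hx
    rw [copula_marg hC p hx, add_sub_cancel_left, abs_mul]
    exact mul_le_mul_of_nonneg_left (haux _ (margVec_mem_cube p hx)) (abs_nonneg _)
  have hFb : ∀ p : Fin d, ∀ q ∈ Icc (0:ℝ) 1,
      Finv n p q ∈ Icc (0:ℝ) 1 ∧ |Finv n p q - q| ≤ δ' := by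
    intro p q hq
    exact finv_bound (fun x => C (margVec p x) + t n * αn n 1 (margVec p x)) δ' hδ'0
      (hHx p) (hH1 p) (hH0 p) q hq (Finv n p q)
      (fun h => hFinv n p q h) (fun h => by rw [h]; exact hFinv0 n p)
  -- pointwise bound
  have hpt : ∀ q : (Icc (0:ℝ) 1 ×ˢ cube d : Set (ℝ × (Fin d → ℝ))),
      |(((q.1.1 * C (fun p => Finv n p (q.1.2 p)) + t n * αn n q.1.1 (fun p => Finv n p (q.1.2 p)))
          - q.1.1 * (C (fun p => Finv n p (q.1.2 p)) + t n * αn n 1 (fun p => Finv n p (q.1.2 p))))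
          / t n)
        - (α q.1.1 q.1.2 - q.1.1 * α 1 q.1.2)| ≤ ε/2 := by
    rintro ⟨⟨s, u⟩, hsu⟩
    obtain ⟨hs, hu⟩ := hsu
    set Fv := fun p => Finv n p (u p) with hFvdef
    have hFc : Fv ∈ cube d := fun p _ => (hFb p (u p) (hu p trivial)).1
    have hdistF : dist Fv u ≤ δ' := by
      rw [dist_pi_le_iff hδ'0]
      intro p
      rw [Real.dist_eq]
      exact (hFb p (u p) (hu p trivial)).2
    have hdbig : ∀ s' : ℝ, dist ((s', Fv) : ℝ × (Fin d → ℝ)) (s', u) < δuc := by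
      intro s'
      rw [Prod.dist_eq, dist_self]
      exact lt_of_le_of_lt (max_le hδ'0 hdistF) hn2
    have hmemF : ∀ s' ∈ Icc (0:ℝ) 1, ((s', Fv) : ℝ × (Fin d → ℝ)) ∈ Icc (0:ℝ) 1 ×ˢ cube d :=
      fun s' hs' => ⟨hs', hFc⟩
    have hmemu : ∀ s' ∈ Icc (0:ℝ) 1, ((s', u) : ℝ × (Fin d → ℝ)) ∈ Icc (0:ℝ) 1 ×ˢ cube d :=
      fun s' hs' => ⟨hs', hu⟩
    have h1mem : (1:ℝ) ∈ Icc (0:ℝ) 1 := ⟨zero_le_one, le_refl 1⟩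
    have huc1 : |α s Fv - α s u| < ε/8 := by
      have := huc (s, Fv) (hmemF s hs) (s, u) (hmemu s hs) (hdbig s)
      rwa [Real.dist_eq] at this
    have huc2 : |α 1 Fv - α 1 u| < ε/8 := by
      have := huc (1, Fv) (hmemF 1 h1mem) (1, u) (hmemu 1 h1mem) (hdbig 1)
      rwa [Real.dist_eq] at this
    have hcv1 : |α s Fv - αn n s Fv| < ε/8 := by
      have := hn3 (s, Fv) (hmemF s hs)
      rwa [Real.dist_eq] at this
    have hcv2 : |α 1 Fv - αn n 1 Fv| < ε/8 := by
      have := hn3 (1, Fv) (hmemF 1 h1mem)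
      rwa [Real.dist_eq] at this
    have hquot : ((s * C Fv + t n * αn n s Fv) - s * (C Fv + t n * αn n 1 Fv)) / t n
        = αn n s Fv - s * αn n 1 Fv := by
      rw [div_eq_iff (ht0 n)]
      ring
    show |((s * C Fv + t n * αn n s Fv) - s * (C Fv + t n * αn n 1 Fv)) / t n - (α s u - s * α 1 u)| ≤ ε/2
    rw [hquot]
    have hA : |αn n s Fv - α s u| ≤ ε/4 := by
      calc |αn n s Fv - α s u| = |(α s Fv - α s u) - (α s Fv - αn n s Fv)| := by ring_nf
        _ ≤ |α s Fv - α s u| + |α s Fv - αn n s Fv| := abs_sub _ _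
        _ ≤ ε/4 := by linarith
    have hB : |αn n 1 Fv - α 1 u| ≤ ε/4 := by
      calc |αn n 1 Fv - α 1 u| = |(α 1 Fv - α 1 u) - (α 1 Fv - αn n 1 Fv)| := by ring_nf
        _ ≤ |α 1 Fv - α 1 u| + |α 1 Fv - αn n 1 Fv| := abs_sub _ _
        _ ≤ ε/4 := by linarith
    calc |(αn n s Fv - s * αn n 1 Fv) - (α s u - s * α 1 u)|
        = |(αn n s Fv - α s u) - s * (αn n 1 Fv - α 1 u)| := by ring_nf
      _ ≤ |αn n s Fv - α s u| + |s * (αn n 1 Fv - α 1 u)| := abs_sub _ _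
      _ = |αn n s Fv - α s u| + s * |αn n 1 Fv - α 1 u| := by
          rw [abs_mul, abs_of_nonneg hs.1]
      _ ≤ ε/4 + 1 * (ε/4) := by
          refine add_le_add hA ?_
          calc s * |αn n 1 Fv - α 1 u| ≤ 1 * |αn n 1 Fv - α 1 u| :=
                mul_le_mul_of_nonneg_right hs.2 (abs_nonneg _)
            _ ≤ 1 * (ε/4) := by rw [one_mul, one_mul]; exact hB
      _ = ε/2 := by ring
  have hbddA : BddAbove (Set.range (fun q : (Icc (0:ℝ) 1 ×ˢ cube d : Set (ℝ × (Fin d → ℝ))) =>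
      |(((q.1.1 * C (fun p => Finv n p (q.1.2 p)) + t n * αn n q.1.1 (fun p => Finv n p (q.1.2 p)))
          - q.1.1 * (C (fun p => Finv n p (q.1.2 p)) + t n * αn n 1 (fun p => Finv n p (q.1.2 p))))
          / t n)
        - (α q.1.1 q.1.2 - q.1.1 * α 1 q.1.2)|)) := by
    refine ⟨ε/2, ?_⟩
    rintro y ⟨q, rfl⟩
    exact hpt q
  have hsup0 : 0 ≤ ⨆ q : (Icc (0:ℝ) 1 ×ˢ cube d : Set (ℝ × (Fin d → ℝ))),
      |(((q.1.1 * C (fun p => Finv n p (q.1.2 p)) + t n * αn n q.1.1 (fun p => Finv n p (q.1.2 p)))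
          - q.1.1 * (C (fun p => Finv n p (q.1.2 p)) + t n * αn n 1 (fun p => Finv n p (q.1.2 p))))
          / t n)
        - (α q.1.1 q.1.2 - q.1.1 * α 1 q.1.2)| :=
    le_trans (abs_nonneg _) (le_ciSup hbddA ⟨_, hq0⟩)
  rw [Real.dist_eq, sub_zero, abs_of_nonneg hsup0]
  exact lt_of_le_of_lt (Real.iSup_le hpt (by positivity)) (by linarith)
end

section
/- Let C be a d-dimensional copula whose partial derivatives ∂_pC exist and are continuous on {u : u_p ∈ (0,1)}, extended by 0 elsewhere. Let gₙ,ₚ : [0,1] → ℝ be bounded functions converging uniformly to continuous functions g_p with g_p(0) = g_p(1) = 0, and let tₙ → 0 with the maps x ↦ x + tₙgₙ,ₚ(x) taking values in [0,1]. Then sup_{x ∈ (0,1)^d} | tₙ⁻¹(C(x₁+tₙgₙ,₁(x₁),...,x_d+tₙgₙ,d(x_d)) − C(x)) − Σ_{p=1}^d ∂_pC(x)g_p(x_p) | → 0. -/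
open MeasureTheory Set Filter

/-- The open unit cube `(0,1)^d`. -/
def openCube (d : ℕ) : Set (Fin d → ℝ) := Set.univ.pi fun _ => Ioo 0 1

lemma copula_mono_lip {d : ℕ} {C : (Fin d → ℝ) → ℝ} (hC : IsCopula d C)
    (p : Fin d) {u v : Fin d → ℝ} (hu : u ∈ cube d) (hv : v ∈ cube d)
    (hq : ∀ q, q ≠ p → u q = v q) (hle : u p ≤ v p) :
    C u ≤ C v ∧ C v - C u ≤ v p - u p := by
  obtain ⟨μ, hprob, hmarg, hCdef⟩ := hC
  set A : (Fin d → ℝ) → Set (Fin d → ℝ) := fun w => {x | ∀ q, x q ≤ w q} with hA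
  have hsub : A u ⊆ A v := fun x hx q => by
    rcases eq_or_ne q p with rfl | h
    · exact le_trans (hx q) hle
    · exact (hq q h) ▸ hx q
  have hfin : ∀ w, μ (A w) ≠ ⊤ := fun w => measure_ne_top μ _
  have hmono : C u ≤ C v := by
    rw [hCdef, hCdef]
    exact ENNReal.toReal_mono (hfin v) (measure_mono hsub)
  refine ⟨hmono, ?_⟩
  have hup : u p ∈ Icc (0:ℝ) 1 := hu p (mem_univ p)
  have hvp : v p ∈ Icc (0:ℝ) 1 := hv p (mem_univ p)
  have hmu : MeasurableSet {x : Fin d → ℝ | x p ≤ u p} :=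
    measurableSet_le (measurable_pi_apply p) measurable_const
  have hdiffsub : A v \ A u ⊆ {x | x p ≤ v p} \ {x | x p ≤ u p} := by
    rintro x ⟨hxv, hxu⟩
    simp only [hA, mem_setOf_eq, not_forall] at hxv hxu
    obtain ⟨q, hqx⟩ := hxu
    rcases eq_or_ne q p with rfl | h
    · exact ⟨hxv q, hqx⟩
    · exact absurd ((hq q h) ▸ hxv q) hqx
  have hsubp : {x : Fin d → ℝ | x p ≤ u p} ⊆ {x | x p ≤ v p} := fun x hx => le_trans hx hle
  have hdm : μ (A v \ A u) ≤ ENNReal.ofReal (v p - u p) := by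
    calc μ (A v \ A u) ≤ μ ({x | x p ≤ v p} \ {x | x p ≤ u p}) := measure_mono hdiffsub
    _ = μ {x | x p ≤ v p} - μ {x | x p ≤ u p} :=
        measure_diff hsubp hmu.nullMeasurableSet (measure_ne_top μ _)
    _ = ENNReal.ofReal (v p) - ENNReal.ofReal (u p) := by rw [hmarg p _ hvp, hmarg p _ hup]
    _ = ENNReal.ofReal (v p - u p) := (ENNReal.ofReal_sub _ hup.1).symm
  have hAle : μ (A v) ≤ μ (A u) + ENNReal.ofReal (v p - u p) := by
    calc μ (A v) ≤ μ (A u ∪ (A v \ A u)) := measure_mono (fun x hx => by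
          by_cases h : x ∈ A u
          · exact Or.inl h
          · exact Or.inr ⟨hx, h⟩)
    _ ≤ μ (A u) + μ (A v \ A u) := measure_union_le _ _
    _ ≤ μ (A u) + ENNReal.ofReal (v p - u p) := add_le_add_right hdm _
  have := ENNReal.toReal_mono (by finiteness) hAle
  rw [ENNReal.toReal_add (hfin u) ENNReal.ofReal_ne_top,
    ENNReal.toReal_ofReal (by linarith [hle])] at this
  rw [hCdef, hCdef]
  linarith [this]

lemma update_mem_cube {d : ℕ} {u : Fin d → ℝ} (hu : u ∈ cube d) (p : Fin d)
    {s : ℝ} (hs : s ∈ Icc (0:ℝ) 1) : Function.update u p s ∈ cube d := by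
  intro q _
  rcases eq_or_ne q p with rfl | h
  · simpa using hs
  · rw [Function.update_of_ne h]; exact hu q (mem_univ q)

lemma copula_update_lip {d : ℕ} {C : (Fin d → ℝ) → ℝ} (hC : IsCopula d C)
    (p : Fin d) {u : Fin d → ℝ} (hu : u ∈ cube d) {s s' : ℝ}
    (hs : s ∈ Icc (0:ℝ) 1) (hs' : s' ∈ Icc (0:ℝ) 1) :
    |C (Function.update u p s) - C (Function.update u p s')| ≤ |s - s'| := by
  have key : ∀ a b : ℝ, a ∈ Icc (0:ℝ) 1 → b ∈ Icc (0:ℝ) 1 → a ≤ b →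
      |C (Function.update u p b) - C (Function.update u p a)| ≤ |b - a| := by
    intro a b ha hb hab
    have h := copula_mono_lip hC p (update_mem_cube hu p ha) (update_mem_cube hu p hb)
      (fun q hq => by rw [Function.update_of_ne hq, Function.update_of_ne hq]) ?_
    · rw [abs_of_nonneg (by linarith [h.1]), abs_of_nonneg (by linarith)]
      simpa using h.2
    · simpa using hab
  rcases le_total s' s with h | h
  · exact key s' s hs' hs h
  · rw [abs_sub_comm, abs_sub_comm s s']; exact key s s' hs hs' h

lemma D_le_one {d : ℕ} {C : (Fin d → ℝ) → ℝ} (hC : IsCopula d C) (p : Fin d)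
    {u : Fin d → ℝ} (hu : u ∈ cube d) (hup : u p ∈ Ioo (0:ℝ) 1) {D' : ℝ}
    (hd : HasDerivWithinAt (fun s => C (Function.update u p s)) D' (Icc (0:ℝ) 1) (u p)) :
    |D'| ≤ 1 := by
  rw [hasDerivWithinAt_iff_tendsto_slope] at hd
  have hne : (nhdsWithin (u p) (Icc (0:ℝ) 1 \ {u p})).NeBot := by
    rw [← mem_closure_iff_nhdsWithin_neBot]
    refine closure_mono (show Ioo (u p) 1 ⊆ Icc (0:ℝ) 1 \ {u p} from ?_) ?_
    · rintro y ⟨h1, h2⟩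
      exact ⟨⟨le_of_lt (lt_trans hup.1 h1), le_of_lt h2⟩, ne_of_gt h1⟩
    · rw [closure_Ioo (ne_of_lt hup.2)]
      exact ⟨le_refl _, le_of_lt hup.2⟩
  refine le_of_tendsto hd.abs ?_
  filter_upwards [self_mem_nhdsWithin] with s hs
  rcases hs with ⟨hs01, hsne⟩
  rw [slope_def_field]
  rw [abs_div, div_le_one (abs_pos.mpr (sub_ne_zero.mpr hsne))]
  exact copula_update_lip hC p hu hs01 ⟨le_of_lt hup.1, le_of_lt hup.2⟩

set_option maxHeartbeats 2000000 in
/-- uniform first-order Taylor expansion of `C` along the perturbations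
`x ↦ (x_p + tₙ gₙ,ₚ(x_p))_p`, uniformly over `(0,1)^d`. -/
theorem copula_uniform_taylor_expansion
    (d : ℕ) (C : (Fin d → ℝ) → ℝ) (hC : IsCopula d C)
    (D : Fin d → (Fin d → ℝ) → ℝ)
    (hDderiv : ∀ p : Fin d, ∀ u ∈ cube d, u p ∈ Ioo (0:ℝ) 1 →
      HasDerivWithinAt (fun s => C (Function.update u p s)) (D p u) (Icc (0:ℝ) 1) (u p))
    (hDcont : ∀ p : Fin d, ContinuousOn (D p) {u | u ∈ cube d ∧ u p ∈ Ioo (0:ℝ) 1})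
    (hDbdry : ∀ p : Fin d, ∀ u, (u p = 0 ∨ u p = 1) → D p u = 0)
    (t : ℕ → ℝ) (ht0 : ∀ n, t n ≠ 0) (htt : Tendsto t atTop (nhds 0))
    (g : ℕ → Fin d → ℝ → ℝ) (glim : Fin d → ℝ → ℝ)
    (hgb : ∀ n (p : Fin d), ∃ M, ∀ x ∈ Icc (0:ℝ) 1, |g n p x| ≤ M)
    (hgunif : ∀ p : Fin d, TendstoUniformlyOn (fun n => g n p) (glim p) atTop (Icc 0 1))
    (hgcont : ∀ p : Fin d, ContinuousOn (glim p) (Icc 0 1))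
    (hg0 : ∀ p : Fin d, glim p 0 = 0) (hg1 : ∀ p : Fin d, glim p 1 = 0)
    (hrange : ∀ n (p : Fin d), ∀ x ∈ Icc (0:ℝ) 1, x + t n * g n p x ∈ Icc (0:ℝ) 1) :
    Tendsto (fun n => ⨆ x : openCube d,
      |(t n)⁻¹ * (C (fun p => x.1 p + t n * g n p (x.1 p)) - C x.1)
        - ∑ p, D p x.1 * glim p (x.1 p)|) atTop (nhds 0) := by
  classical
  choose G hG using fun p => isCompact_Icc.exists_bound_of_continuousOn (hgcont p)
  set M : ℝ := 1 + ∑ p : Fin d, max (G p) 0 with hM_def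
  have hsum0 : (0:ℝ) ≤ ∑ p : Fin d, max (G p) 0 :=
    Finset.sum_nonneg fun p _ => le_max_right _ _
  have hM1 : (1:ℝ) ≤ M := by rw [hM_def]; linarith
  have hM0 : (0:ℝ) < M := by linarith
  have hglimM : ∀ p : Fin d, ∀ y ∈ Icc (0:ℝ) 1, |glim p y| ≤ M - 1 := by
    intro p y hy
    calc |glim p y| ≤ G p := by simpa using hG p y hy
    _ ≤ max (G p) 0 := le_max_left _ _
    _ ≤ ∑ q : Fin d, max (G q) 0 :=
        Finset.single_le_sum (f := fun q => max (G q) 0)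
          (fun q _ => le_max_right _ _) (Finset.mem_univ p)
    _ = M - 1 := by rw [hM_def]; ring
  rw [NormedAddCommGroup.tendsto_nhds_zero]
  intro ε hε
  set K : ℝ := d * (M + 3) with hK_def
  have hK0 : (0:ℝ) ≤ K := by positivity
  set ε₁ : ℝ := ε / (2 * (K + 1)) with hε₁_def
  have hε₁ : 0 < ε₁ := by rw [hε₁_def]; positivity
  have hKε : K * ε₁ < ε := by
    rw [hε₁_def, mul_div_assoc']
    rw [div_lt_iff₀ (by positivity)]
    nlinarith
  -- uniform continuity of glim
  have hglimUC : ∀ p : Fin d, ∃ δ > 0, ∀ y ∈ Icc (0:ℝ) 1, ∀ z ∈ Icc (0:ℝ) 1,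
      dist y z < δ → dist (glim p y) (glim p z) < ε₁ := fun p =>
    (Metric.uniformContinuousOn_iff.mp
      (isCompact_Icc.uniformContinuousOn_of_continuous (hgcont p))) ε₁ hε₁
  choose δ hδ0 hδ using hglimUC
  -- uniform continuity of D p on compact sets away from the boundary in coordinate p
  have hcubeCompact : IsCompact (cube d) := isCompact_univ_pi fun _ => isCompact_Icc
  set Kset : Fin d → Set (Fin d → ℝ) :=
    fun p => cube d ∩ {u | u p ∈ Icc (δ p / 2) (1 - δ p / 2)} with hKset_def
  have hKsetCompact : ∀ p, IsCompact (Kset p) := fun p =>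
    hcubeCompact.inter_right (isClosed_Icc.preimage (continuous_apply p))
  have hKsetSub : ∀ p, Kset p ⊆ {u | u ∈ cube d ∧ u p ∈ Ioo (0:ℝ) 1} := by
    rintro p u ⟨h1, h2⟩
    exact ⟨h1, ⟨by have := hδ0 p; have := h2.1; simp only [mem_setOf_eq] at *; linarith,
      by have := hδ0 p; have := h2.2; simp only [mem_setOf_eq] at *; linarith⟩⟩
  have hDUC : ∀ p : Fin d, ∃ η > 0, ∀ u ∈ Kset p, ∀ v ∈ Kset p,
      dist u v < η → dist (D p u) (D p v) < ε₁ := fun p =>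
    (Metric.uniformContinuousOn_iff.mp
      ((hKsetCompact p).uniformContinuousOn_of_continuous ((hDcont p).mono (hKsetSub p)))) ε₁ hε₁
  choose η hη0 hη using hDUC
  -- eventualities
  have E1 : ∀ᶠ n in atTop, ∀ p : Fin d, ∀ y ∈ Icc (0:ℝ) 1, dist (glim p y) (g n p y) < ε₁ :=
    eventually_all.mpr fun p => (Metric.tendstoUniformlyOn_iff.mp (hgunif p)) ε₁ hε₁
  have E2 : ∀ᶠ n in atTop, ∀ p : Fin d, ∀ y ∈ Icc (0:ℝ) 1, dist (glim p y) (g n p y) < 1 :=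
    eventually_all.mpr fun p => (Metric.tendstoUniformlyOn_iff.mp (hgunif p)) 1 one_pos
  have E3 : ∀ᶠ n in atTop, ∀ p : Fin d, |t n| * M ≤ min (η p) (δ p / 2) / 2 := by
    refine eventually_all.mpr fun p => ?_
    have hc : 0 < min (η p) (δ p / 2) / 2 / M := by
      have := lt_min (hη0 p) (by linarith [hδ0 p] : (0:ℝ) < δ p / 2)
      positivity
    filter_upwards [Metric.tendsto_nhds.mp htt _ hc] with n hn
    rw [Real.dist_eq, sub_zero] at hn
    calc |t n| * M ≤ (min (η p) (δ p / 2) / 2 / M) * M :=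
          mul_le_mul_of_nonneg_right hn.le hM0.le
    _ = min (η p) (δ p / 2) / 2 := div_mul_cancel₀ _ (ne_of_gt hM0)
  filter_upwards [E1, E2, E3] with n hE1 hE2 hE3
  have hgM : ∀ p : Fin d, ∀ y ∈ Icc (0:ℝ) 1, |g n p y| ≤ M := by
    intro p y hy
    have h1 := hE2 p y hy
    rw [Real.dist_eq] at h1
    have h2 := hglimM p y hy
    calc |g n p y| = |glim p y - (glim p y - g n p y)| := by ring_nf
    _ ≤ |glim p y| + |glim p y - g n p y| := abs_sub _ _
    _ ≤ M := by linarith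
  have hbound : ∀ x : openCube d,
      |(t n)⁻¹ * (C (fun p => x.1 p + t n * g n p (x.1 p)) - C x.1)
        - ∑ p, D p x.1 * glim p (x.1 p)| ≤ K * ε₁ := by
    rintro ⟨x, hx⟩
    have hxIoo : ∀ q, x q ∈ Ioo (0:ℝ) 1 := fun q => hx q (mem_univ q)
    have hxc : x ∈ cube d := fun q _ => ⟨(hxIoo q).1.le, (hxIoo q).2.le⟩
    set pert : Fin d → ℝ := fun q => x q + t n * g n q (x q) with hpert_def
    have hpertIcc : ∀ q, pert q ∈ Icc (0:ℝ) 1 := fun q =>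
      hrange n q (x q) ⟨(hxIoo q).1.le, (hxIoo q).2.le⟩
    set Y : ℕ → Fin d → ℝ := fun k q => if (q:ℕ) < k then pert q else x q with hY_def
    have hY0 : Y 0 = x := funext fun q => if_neg (Nat.not_lt_zero _)
    have hYd : Y d = pert := funext fun q => if_pos q.isLt
    have hYcube : ∀ k, Y k ∈ cube d := by
      intro k q _
      rw [hY_def]
      by_cases h : (q:ℕ) < k
      · simpa [h] using hpertIcc q
      · simpa [h] using ⟨(hxIoo q).1.le, (hxIoo q).2.le⟩
    have hstep : ∀ k, ∀ hk : k < d, Y (k+1) = Function.update (Y k) ⟨k, hk⟩ (pert ⟨k, hk⟩) := by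
      intro k hk
      funext q
      rcases eq_or_ne q ⟨k, hk⟩ with rfl | hq
      · rw [Function.update_self, hY_def]
        simp
      · rw [Function.update_of_ne hq, hY_def]
        have hqk : (q:ℕ) ≠ k := fun h => hq (Fin.ext h)
        have : ((q:ℕ) < k + 1) ↔ ((q:ℕ) < k) := by omega
        simp only [this]
    have htel : C pert - C x = ∑ k ∈ Finset.range d, (C (Y (k+1)) - C (Y k)) := by
      rw [Finset.sum_range_sub (fun k => C (Y k)) d, hYd, hY0]
    set S : ℕ → ℝ := fun k => if h : k < d then D ⟨k,h⟩ x * glim ⟨k,h⟩ (x ⟨k,h⟩) else 0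
      with hS_def
    have hsumS : ∑ p : Fin d, D p x * glim p (x p) = ∑ k ∈ Finset.range d, S k := by
      rw [← Fin.sum_univ_eq_sum_range S d]
      refine Finset.sum_congr rfl fun i _ => ?_
      rw [hS_def]
      simp [i.isLt]
    have hexpand : (t n)⁻¹ * (C pert - C x) - ∑ p : Fin d, D p x * glim p (x p)
        = ∑ k ∈ Finset.range d, ((t n)⁻¹ * (C (Y (k+1)) - C (Y k)) - S k) := by
      rw [Finset.sum_sub_distrib, ← Finset.mul_sum, ← htel, hsumS]
    have hterm : ∀ k ∈ Finset.range d,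
        |(t n)⁻¹ * (C (Y (k+1)) - C (Y k)) - S k| ≤ (M + 3) * ε₁ := by
      intro k hkmem
      have hk : k < d := Finset.mem_range.mp hkmem
      set p : Fin d := ⟨k, hk⟩ with hp_def
      have hSk : S k = D p x * glim p (x p) := by rw [hS_def]; simp [hk, hp_def]
      have haIoo : x p ∈ Ioo (0:ℝ) 1 := hxIoo p
      have haIcc : x p ∈ Icc (0:ℝ) 1 := ⟨haIoo.1.le, haIoo.2.le⟩
      have hbval : pert p = x p + t n * g n p (x p) := by rw [hpert_def]
      have hbIcc : pert p ∈ Icc (0:ℝ) 1 := hpertIcc p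
      have hu : Y k ∈ cube d := hYcube k
      have hup : Y k p = x p := by rw [hY_def]; simp [hp_def]
      have hY1 : Y (k+1) = Function.update (Y k) p (pert p) := hstep k hk
      have hDx1 : |D p x| ≤ 1 := D_le_one hC p hxc haIoo (hDderiv p x hxc haIoo)
      have hgdist : |glim p (x p) - g n p (x p)| < ε₁ := by
        have := hE1 p (x p) haIcc; rwa [Real.dist_eq] at this
      rcases eq_or_ne (pert p) (x p) with heq | hne
      · -- degenerate case : no movement in this coordinate
        have hgz : g n p (x p) = 0 := by
          have h0 : t n * g n p (x p) = 0 := by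
            have := hbval; rw [heq] at this; linarith
          rcases mul_eq_zero.mp h0 with h | h
          · exact absurd h (ht0 n)
          · exact h
        have hCeq : C (Y (k+1)) = C (Y k) := by
          rw [hY1, heq, ← hup, Function.update_eq_self]
        rw [hCeq, hSk, sub_self, mul_zero, zero_sub, abs_neg, abs_mul]
        have hglim1 : |glim p (x p)| ≤ ε₁ := by
          rw [hgz, sub_zero] at hgdist; exact hgdist.le
        calc |D p x| * |glim p (x p)| ≤ 1 * ε₁ :=
              mul_le_mul hDx1 hglim1 (abs_nonneg _) zero_le_one
        _ ≤ (M + 3) * ε₁ := by nlinarith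
      · -- main case : apply the mean value theorem
        have hlohi : min (x p) (pert p) < max (x p) (pert p) := min_lt_max.mpr (Ne.symm hne)
        have hlo0 : (0:ℝ) ≤ min (x p) (pert p) := le_min haIcc.1 hbIcc.1
        have hhi1 : max (x p) (pert p) ≤ 1 := max_le haIcc.2 hbIcc.2
        have hIooSub : Ioo (min (x p) (pert p)) (max (x p) (pert p)) ⊆ Ioo (0:ℝ) 1 :=
          fun s hs => ⟨lt_of_le_of_lt hlo0 hs.1, lt_of_lt_of_le hs.2 hhi1⟩
        have hIccSub : Icc (min (x p) (pert p)) (max (x p) (pert p)) ⊆ Icc (0:ℝ) 1 :=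
          fun s hs => ⟨le_trans hlo0 hs.1, le_trans hs.2 hhi1⟩
        have hφcont : ContinuousOn (fun s => C (Function.update (Y k) p s))
            (Icc (min (x p) (pert p)) (max (x p) (pert p))) := by
          refine ((LipschitzOnWith.of_dist_le_mul (K := 1) ?_).continuousOn).mono hIccSub
          intro s hs s' hs'
          rw [Real.dist_eq, Real.dist_eq, NNReal.coe_one, one_mul]
          exact copula_update_lip hC p hu hs hs'
        have hφderiv : ∀ s ∈ Ioo (min (x p) (pert p)) (max (x p) (pert p)),
            HasDerivAt (fun s => C (Function.update (Y k) p s))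
              (D p (Function.update (Y k) p s)) s := by
          intro s hs
          have hs01 := hIooSub hs
          have hw : Function.update (Y k) p s ∈ cube d :=
            update_mem_cube hu p ⟨hs01.1.le, hs01.2.le⟩
          have hd := hDderiv p _ hw (by rw [Function.update_self]; exact hs01)
          simp only [Function.update_idem, Function.update_self] at hd
          exact hd.hasDerivAt (Icc_mem_nhds hs01.1 hs01.2)
        obtain ⟨c, hc, hceq⟩ := exists_hasDerivAt_eq_slope _ _ hlohi hφcont hφderiv
        have hc01 : c ∈ Ioo (0:ℝ) 1 := hIooSub hc
        have hucc : Function.update (Y k) p c ∈ cube d :=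
          update_mem_cube hu p ⟨hc01.1.le, hc01.2.le⟩
        have hucp : Function.update (Y k) p c p = c := Function.update_self p c (Y k)
        have hDc1 : |D p (Function.update (Y k) p c)| ≤ 1 :=
          D_le_one hC p hucc (by rw [hucp]; exact hc01)
            (hDderiv p _ hucc (by rw [hucp]; exact hc01))
        -- the slope identity
        have hslope : C (Function.update (Y k) p (pert p)) - C (Y k)
            = D p (Function.update (Y k) p c) * (pert p - x p) := by
          have hCYk : C (Y k) = C (Function.update (Y k) p (x p)) := by
            rw [← hup, Function.update_eq_self]
          rw [hCYk]
          have hne' : max (x p) (pert p) - min (x p) (pert p) ≠ 0 := by linarith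
          have h := (eq_div_iff hne').mp hceq
          rcases lt_or_gt_of_ne hne with hlt | hgt
          · -- pert p < x p
            rw [min_eq_right hlt.le, max_eq_left hlt.le] at h
            linear_combination h
          · -- x p < pert p
            rw [min_eq_left hgt.le, max_eq_right hgt.le] at h
            linear_combination -h
        have hquot : (t n)⁻¹ * (C (Y (k+1)) - C (Y k))
            = D p (Function.update (Y k) p c) * g n p (x p) := by
          rw [hY1, hslope, hbval]
          have hg' : x p + t n * g n p (x p) - x p = t n * g n p (x p) := by ring
          rw [hg', show (t n)⁻¹ * (D p (Function.update (Y k) p c) * (t n * g n p (x p)))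
            = (t n)⁻¹ * t n * (D p (Function.update (Y k) p c) * g n p (x p)) from by ring,
            inv_mul_cancel₀ (ht0 n), one_mul]
        rw [hquot, hSk]
        have hident : D p (Function.update (Y k) p c) * g n p (x p) - D p x * glim p (x p)
            = D p (Function.update (Y k) p c) * (g n p (x p) - glim p (x p))
              + glim p (x p) * (D p (Function.update (Y k) p c) - D p x) := by ring
        rw [hident]
        have hgd' : |g n p (x p) - glim p (x p)| ≤ ε₁ := by
          rw [abs_sub_comm]; exact hgdist.le
        have hbma : |pert p - x p| ≤ |t n| * M := by
          rw [hbval]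
          have : x p + t n * g n p (x p) - x p = t n * g n p (x p) := by ring
          rw [this, abs_mul]
          exact mul_le_mul_of_nonneg_left (hgM p (x p) haIcc) (abs_nonneg _)
        have htM := hE3 p
        have hca : |c - x p| ≤ min (η p) (δ p / 2) / 2 := by
          have h1 : |c - x p| ≤ max (x p) (pert p) - min (x p) (pert p) := by
            have hax : x p ∈ Icc (min (x p) (pert p)) (max (x p) (pert p)) :=
              ⟨min_le_left _ _, le_max_left _ _⟩
            rw [abs_le]
            exact ⟨by linarith [hc.1, hax.2], by linarith [hc.2, hax.1]⟩
          calc |c - x p| ≤ max (x p) (pert p) - min (x p) (pert p) := h1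
          _ = |pert p - x p| := max_sub_min_eq_abs (x p) (pert p)
          _ ≤ |t n| * M := hbma
          _ ≤ min (η p) (δ p / 2) / 2 := htM
        by_cases hmid : δ p ≤ x p ∧ x p ≤ 1 - δ p
        · -- middle region : use uniform continuity of D p
          have hminδ : min (η p) (δ p / 2) / 2 ≤ δ p / 2 := by
            have := min_le_right (η p) (δ p / 2); linarith [hδ0 p]
          have hminη : min (η p) (δ p / 2) / 2 ≤ η p / 2 := by
            have := min_le_left (η p) (δ p / 2); linarith
          have hcabs := abs_le.mp hca
          have hxK : x ∈ Kset p := by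
            refine ⟨hxc, ?_⟩
            simp only [mem_setOf_eq, mem_Icc]
            constructor <;> [linarith [hmid.1, hδ0 p]; linarith [hmid.2, hδ0 p]]
          have hucK : Function.update (Y k) p c ∈ Kset p := by
            refine ⟨hucc, ?_⟩
            simp only [mem_setOf_eq, hucp, mem_Icc]
            constructor <;> [linarith [hmid.1]; linarith [hmid.2]]
          have hdist : dist (Function.update (Y k) p c) x ≤ η p / 2 := by
            rw [dist_pi_le_iff (by linarith [hη0 p])]
            intro q
            rw [Real.dist_eq]
            rcases eq_or_ne q p with rfl | hq
            · rw [hucp]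
              linarith [hca, hminη]
            · rw [Function.update_of_ne hq, hY_def]
              by_cases h : (q:ℕ) < k
              · simp only [if_pos h]
                have : pert q - x q = t n * g n q (x q) := by rw [hpert_def]; ring
                rw [this, abs_mul]
                calc |t n| * |g n q (x q)| ≤ |t n| * M :=
                      mul_le_mul_of_nonneg_left
                        (hgM q (x q) ⟨(hxIoo q).1.le, (hxIoo q).2.le⟩) (abs_nonneg _)
                _ ≤ min (η p) (δ p / 2) / 2 := htM
                _ ≤ η p / 2 := hminη
              · simp only [if_neg h, sub_self, abs_zero]
                linarith [hη0 p]
          have hDD : |D p (Function.update (Y k) p c) - D p x| ≤ ε₁ := by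
            have := hη p _ hucK x hxK (lt_of_le_of_lt hdist (by linarith [hη0 p]))
            rw [Real.dist_eq] at this; exact this.le
          have hglim1 : |glim p (x p)| ≤ M - 1 := hglimM p (x p) haIcc
          calc |D p (Function.update (Y k) p c) * (g n p (x p) - glim p (x p))
                + glim p (x p) * (D p (Function.update (Y k) p c) - D p x)|
              ≤ |D p (Function.update (Y k) p c)| * |g n p (x p) - glim p (x p)|
                + |glim p (x p)| * |D p (Function.update (Y k) p c) - D p x| := by
                refine le_trans (abs_add_le _ _) ?_
                rw [abs_mul, abs_mul]
          _ ≤ 1 * ε₁ + (M - 1) * ε₁ :=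
              add_le_add (mul_le_mul hDc1 hgd' (abs_nonneg _) zero_le_one)
                (mul_le_mul hglim1 hDD (abs_nonneg _) (by linarith))
          _ ≤ (M + 3) * ε₁ := by nlinarith
        · -- boundary region : glim is small
          have hglim1 : |glim p (x p)| ≤ ε₁ := by
            rcases Decidable.not_and_iff_or_not.mp hmid with h | h
            · push_neg at h
              have := hδ p (x p) haIcc 0 (by norm_num)
                (by rw [Real.dist_eq, sub_zero, abs_of_nonneg haIcc.1]; exact h)
              rw [Real.dist_eq, hg0 p, sub_zero] at this
              exact this.le
            · push_neg at h
              have := hδ p (x p) haIcc 1 (by norm_num)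
                (by rw [Real.dist_eq, abs_of_nonpos (by linarith [haIcc.2])]; linarith)
              rw [Real.dist_eq, hg1 p, sub_zero] at this
              exact this.le
          have hDD2 : |D p (Function.update (Y k) p c) - D p x| ≤ 2 := by
            calc |D p (Function.update (Y k) p c) - D p x|
                ≤ |D p (Function.update (Y k) p c)| + |D p x| := abs_sub _ _
            _ ≤ 2 := by linarith
          calc |D p (Function.update (Y k) p c) * (g n p (x p) - glim p (x p))
                + glim p (x p) * (D p (Function.update (Y k) p c) - D p x)|
              ≤ |D p (Function.update (Y k) p c)| * |g n p (x p) - glim p (x p)|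
                + |glim p (x p)| * |D p (Function.update (Y k) p c) - D p x| := by
                refine le_trans (abs_add_le _ _) ?_
                rw [abs_mul, abs_mul]
          _ ≤ 1 * ε₁ + ε₁ * 2 :=
              add_le_add (mul_le_mul hDc1 hgd' (abs_nonneg _) zero_le_one)
                (mul_le_mul hglim1 hDD2 (abs_nonneg _) hε₁.le)
          _ ≤ (M + 3) * ε₁ := by nlinarith
    calc |(t n)⁻¹ * (C pert - C x) - ∑ p : Fin d, D p x * glim p (x p)|
        = |∑ k ∈ Finset.range d, ((t n)⁻¹ * (C (Y (k+1)) - C (Y k)) - S k)| := by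
          rw [hexpand]
    _ ≤ ∑ k ∈ Finset.range d, |(t n)⁻¹ * (C (Y (k+1)) - C (Y k)) - S k| :=
        Finset.abs_sum_le_sum_abs _ _
    _ ≤ ∑ _k ∈ Finset.range d, (M + 3) * ε₁ := Finset.sum_le_sum hterm
    _ = K * ε₁ := by rw [Finset.sum_const, Finset.card_range, hK_def]; push_cast; ring
  haveI : Nonempty ↥(openCube d) :=
    ⟨⟨fun _ => 1/2, fun q _ => by norm_num⟩⟩
  set F : ↥(openCube d) → ℝ := fun x =>
    |(t n)⁻¹ * (C (fun p => x.1 p + t n * g n p (x.1 p)) - C x.1)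
      - ∑ p, D p x.1 * glim p (x.1 p)| with hF_def
  have hbdd : BddAbove (Set.range F) := ⟨K * ε₁, by rintro _ ⟨x, rfl⟩; exact hbound x⟩
  have h1 : (⨆ x : ↥(openCube d), F x) ≤ K * ε₁ := ciSup_le hbound
  have h2 : 0 ≤ (⨆ x : ↥(openCube d), F x) :=
    le_ciSup_of_le hbdd (Classical.arbitrary _) (abs_nonneg _)
  rw [Real.norm_eq_abs, abs_of_nonneg h2]
  exact lt_of_le_of_lt h1 hKε
end
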